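/- For the TRW coframe and connection, the axial part of the torsion, A_a := (1/6) ε_{abcd} T^{bcd}, has squared magnitude η^{ab} A_a A_b = −4 W₂(t)² at every point of U. -/

import Mathlib

/-!
STATEMENT 9: For the TRW coframe and connection, the axial part of the torsion,
A_a = (1/6) ε_{abcd} T^{bcd}, has squared magnitude η^{ab} A_a A_b = −4 W₂(t)²
at every point of U. Frame indices are raised/lowered with η = diag(−1,1,1,1);
ε_{abcd} is the Levi-Civita symbol with ε_{1234} = 1 (indices 0..3 in Fin 4).
Coordinates: x : Fin 4 → ℝ with t = x 0, r = x 1, θ = x 2, φ = x 3.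
-/

open Real
open scoped ContDiff

noncomputable section

/-- Partial derivative in the μ-th coordinate direction. -/
def pd (μ : Fin 4) (f : (Fin 4 → ℝ) → ℝ) (x : Fin 4 → ℝ) : ℝ :=
  fderiv ℝ f x (Pi.single μ 1)

/-- The Minkowski metric η = diag(−1,1,1,1) on frame indices. -/
def eta : Matrix (Fin 4) (Fin 4) ℝ := Matrix.diagonal ![-1, 1, 1, 1]

/-- The TRW coframe h^a_μ = diag(1, a/χ, a r, a r sinθ), χ = √(1 − k r²);
rows are frame indices a, columns are coordinate indices μ. -/
def hco (k : ℝ) (a : ℝ → ℝ) (x : Fin 4 → ℝ) : Matrix (Fin 4) (Fin 4) ℝ :=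
  Matrix.diagonal
    ![1, a (x 0) / Real.sqrt (1 - k * (x 1) ^ 2),
      a (x 0) * (x 1), a (x 0) * (x 1) * Real.sin (x 2)]

/-- The inverse frame h_a^μ = diag(1, χ/a, 1/(a r), 1/(a r sinθ));
rows are frame indices a, columns are coordinate indices μ. -/
def hin (k : ℝ) (a : ℝ → ℝ) (x : Fin 4 → ℝ) : Matrix (Fin 4) (Fin 4) ℝ :=
  Matrix.diagonal
    ![1, Real.sqrt (1 - k * (x 1) ^ 2) / a (x 0),
      1 / (a (x 0) * (x 1)), 1 / (a (x 0) * (x 1) * Real.sin (x 2))]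

/-- The matrices ω_μ = (ω^a_{bμ}) of the TRW connection, obtained from the
antisymmetric one-forms ω_{12} = W₁(a/χ) dr, ω_{13} = W₁ a r dθ,
ω_{14} = W₁ a r sinθ dφ, ω_{23} = −χ dθ + W₂ a r sinθ dφ,
ω_{24} = −W₂ a r dθ − χ sinθ dφ, ω_{34} = W₂(a/χ) dr − cosθ dφ,
via ω^a_{bμ} = η^{ac} ω_{cbμ}. -/
def omegaTRW (k : ℝ) (a W₁ W₂ : ℝ → ℝ) (μ : Fin 4) (x : Fin 4 → ℝ) :
    Matrix (Fin 4) (Fin 4) ℝ :=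
  let t := x 0
  let r := x 1
  let θ := x 2
  let χ := Real.sqrt (1 - k * r ^ 2)
  ![(0 : Matrix (Fin 4) (Fin 4) ℝ),
    !![0, -(W₁ t * a t / χ), 0, 0;
       -(W₁ t * a t / χ), 0, 0, 0;
       0, 0, 0, W₂ t * a t / χ;
       0, 0, -(W₂ t * a t / χ), 0],
    !![0, 0, -(W₁ t * a t * r), 0;
       0, 0, -χ, -(W₂ t * a t * r);
       -(W₁ t * a t * r), χ, 0, 0;
       0, W₂ t * a t * r, 0, 0],
    !![0, 0, 0, -(W₁ t * a t * r * Real.sin θ);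
       0, 0, W₂ t * a t * r * Real.sin θ, -(χ * Real.sin θ);
       0, -(W₂ t * a t * r * Real.sin θ), 0, -Real.cos θ;
       -(W₁ t * a t * r * Real.sin θ), χ * Real.sin θ, Real.cos θ, 0]] μ

/-- Torsion tensor T^a_{μν} = ∂_μ h^a_ν − ∂_ν h^a_μ + ω^a_{bμ} h^b_ν − ω^a_{bν} h^b_μ. -/
def Tor (k : ℝ) (a W₁ W₂ : ℝ → ℝ) (x : Fin 4 → ℝ) (A μ ν : Fin 4) : ℝ :=
  pd μ (fun y => hco k a y A ν) x - pd ν (fun y => hco k a y A μ) x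
    + ∑ b, (omegaTRW k a W₁ W₂ μ x A b * hco k a x b ν
        - omegaTRW k a W₁ W₂ ν x A b * hco k a x b μ)

/-- Frame components of the torsion tensor: T^a_{bc} = T^a_{μν} h_b^μ h_c^ν. -/
def Tfr (k : ℝ) (a W₁ W₂ : ℝ → ℝ) (x : Fin 4 → ℝ) (A B C : Fin 4) : ℝ :=
  ∑ μ, ∑ ν, Tor k a W₁ W₂ x A μ ν * hin k a x B μ * hin k a x C ν

/-- The totally antisymmetric Levi-Civita symbol ε_{abcd} with ε_{1234} = 1,
defined via permutation signs (as the determinant of the matrix whose rows are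
the standard basis vectors e_a, e_b, e_c, e_d). -/
def eps (a b c d : Fin 4) : ℝ :=
  Matrix.det (Matrix.of fun i j => if ![a, b, c, d] i = j then (1 : ℝ) else 0)

/-- T^{bcd}: all frame indices raised with η. -/
def Tup (k : ℝ) (a W₁ W₂ : ℝ → ℝ) (x : Fin 4 → ℝ) (B C D : Fin 4) : ℝ :=
  ∑ C', ∑ D', eta C C' * eta D D' * Tfr k a W₁ W₂ x B C' D'

/-- Axial part of the torsion: A_a = (1/6) ε_{abcd} T^{bcd}. -/
def Afr (k : ℝ) (a W₁ W₂ : ℝ → ℝ) (x : Fin 4 → ℝ) (A : Fin 4) : ℝ :=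
  (1 / 6) * ∑ B, ∑ C, ∑ D, eps A B C D * Tup k a W₁ W₂ x B C D


section Aux

lemma hproj (i : Fin 4) (x : Fin 4 → ℝ) :
    HasFDerivAt (fun y : Fin 4 → ℝ => y i)
      (ContinuousLinearMap.proj i : (Fin 4 → ℝ) →L[ℝ] ℝ) x :=
  (ContinuousLinearMap.proj i : (Fin 4 → ℝ) →L[ℝ] ℝ).hasFDerivAt

lemma pd_zero (μ : Fin 4) (x : Fin 4 → ℝ) : pd μ (fun _ => (0:ℝ)) x = 0 := by
  simp [pd]

lemma pd_one (μ : Fin 4) (x : Fin 4 → ℝ) : pd μ (fun _ => (1:ℝ)) x = 0 := by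
  simp [pd]

lemma pd_f2 (a : ℝ → ℝ) (x : Fin 4 → ℝ) (hd : DifferentiableAt ℝ a (x 0)) (μ : Fin 4) :
    pd μ (fun y => a (y 0) * (y 1)) x = ![deriv a (x 0) * x 1, a (x 0), 0, 0] μ := by
  have hA : HasFDerivAt (fun y : Fin 4 → ℝ => a (y 0))
      ((deriv a (x 0)) • (ContinuousLinearMap.proj 0 : (Fin 4 → ℝ) →L[ℝ] ℝ)) x :=
    hd.hasDerivAt.comp_hasFDerivAt x (hproj 0 x)
  have h : HasFDerivAt (fun y : Fin 4 → ℝ => a (y 0) * (y 1)) _ x := hA.mul (hproj 1 x)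
  rw [pd, h.fderiv]
  fin_cases μ <;> simp [Pi.single_apply] <;> ring

lemma pd_f3 (a : ℝ → ℝ) (x : Fin 4 → ℝ) (hd : DifferentiableAt ℝ a (x 0)) (μ : Fin 4) :
    pd μ (fun y => a (y 0) * (y 1) * Real.sin (y 2)) x =
      ![deriv a (x 0) * x 1 * Real.sin (x 2), a (x 0) * Real.sin (x 2),
        a (x 0) * x 1 * Real.cos (x 2), 0] μ := by
  have hA : HasFDerivAt (fun y : Fin 4 → ℝ => a (y 0))
      ((deriv a (x 0)) • (ContinuousLinearMap.proj 0 : (Fin 4 → ℝ) →L[ℝ] ℝ)) x :=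
    hd.hasDerivAt.comp_hasFDerivAt x (hproj 0 x)
  have hs : HasFDerivAt (fun y : Fin 4 → ℝ => Real.sin (y 2))
      ((Real.cos (x 2)) • (ContinuousLinearMap.proj 2 : (Fin 4 → ℝ) →L[ℝ] ℝ)) x :=
    by have := (Real.hasDerivAt_sin (x 2)).comp_hasFDerivAt x (hproj 2 x); exact this
  have h : HasFDerivAt (fun y : Fin 4 → ℝ => a (y 0) * (y 1) * Real.sin (y 2)) _ x :=
    (hA.mul (hproj 1 x)).mul hs
  rw [pd, h.fderiv]
  fin_cases μ <;> simp [Pi.single_apply] <;> ring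

lemma pd_f1 (k : ℝ) (a : ℝ → ℝ) (x : Fin 4 → ℝ) (hd : DifferentiableAt ℝ a (x 0))
    (hk : 0 < 1 - k * (x 1) ^ 2) (μ : Fin 4) :
    pd μ (fun y => a (y 0) / Real.sqrt (1 - k * (y 1) ^ 2)) x =
      ![deriv a (x 0) / Real.sqrt (1 - k * (x 1) ^ 2),
        a (x 0) * (k * x 1) / Real.sqrt (1 - k * (x 1) ^ 2) ^ 3, 0, 0] μ := by
  have hA : HasFDerivAt (fun y : Fin 4 → ℝ => a (y 0))
      ((deriv a (x 0)) • (ContinuousLinearMap.proj 0 : (Fin 4 → ℝ) →L[ℝ] ℝ)) x :=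
    hd.hasDerivAt.comp_hasFDerivAt x (hproj 0 x)
  have hχ : Real.sqrt (1 - k * (x 1) ^ 2) ≠ 0 := ne_of_gt (Real.sqrt_pos.2 hk)
  have hu : HasDerivAt (fun r : ℝ => 1 - k * r ^ 2) (-(k * (2 * x 1 ^ 1))) (x 1) := by
    simpa using ((hasDerivAt_pow 2 (x 1)).const_mul k).const_sub 1
  have hs : HasDerivAt (fun r : ℝ => Real.sqrt (1 - k * r ^ 2))
      (1 / (2 * Real.sqrt (1 - k * (x 1) ^ 2)) * -(k * (2 * x 1 ^ 1))) (x 1) :=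
    (Real.hasDerivAt_sqrt (ne_of_gt hk)).comp (x 1) hu
  have hi := hs.inv hχ
  have hI : HasFDerivAt (fun y : Fin 4 → ℝ => (Real.sqrt (1 - k * (y 1) ^ 2))⁻¹)
      ((-(1 / (2 * Real.sqrt (1 - k * (x 1) ^ 2)) * -(k * (2 * x 1 ^ 1))) /
          Real.sqrt (1 - k * (x 1) ^ 2) ^ 2) •
        (ContinuousLinearMap.proj 1 : (Fin 4 → ℝ) →L[ℝ] ℝ)) x :=
    by have := hi.comp_hasFDerivAt x (hproj 1 x); exact this
  have h := hA.mul hI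
  have h' : HasFDerivAt (fun y : Fin 4 → ℝ => a (y 0) / Real.sqrt (1 - k * (y 1) ^ 2)) _ x :=
    h.congr_of_eventuallyEq (Filter.Eventually.of_forall fun y => (div_eq_mul_inv _ _))
  rw [pd, h'.fderiv]
  have hsq2 : Real.sqrt (1 - k * (x 1) ^ 2) ^ 2 = 1 - k * (x 1) ^ 2 := Real.sq_sqrt hk.le
  fin_cases μ <;> simp [Pi.single_apply] <;> field_simp <;> ring_nf

/-- Explicit table of coordinate derivatives of the coframe components. -/
def PD (k : ℝ) (a : ℝ → ℝ) (x : Fin 4 → ℝ) (μ A ν : Fin 4) : ℝ :=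
  if A = ν then
    ![0,
      ![deriv a (x 0) / Real.sqrt (1 - k * (x 1) ^ 2),
        a (x 0) * (k * x 1) / Real.sqrt (1 - k * (x 1) ^ 2) ^ 3, 0, 0] μ,
      ![deriv a (x 0) * x 1, a (x 0), 0, 0] μ,
      ![deriv a (x 0) * x 1 * Real.sin (x 2), a (x 0) * Real.sin (x 2),
        a (x 0) * x 1 * Real.cos (x 2), 0] μ] A
  else 0

lemma pd_hco (k : ℝ) (a : ℝ → ℝ) (x : Fin 4 → ℝ) (hd : DifferentiableAt ℝ a (x 0))
    (hk : 0 < 1 - k * (x 1) ^ 2) (μ A ν : Fin 4) :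
    pd μ (fun y => hco k a y A ν) x = PD k a x μ A ν := by
  fin_cases A <;> fin_cases ν <;>
    simp [hco, PD, Matrix.diagonal, pd_f1 k a x hd hk, pd_f2 a x hd, pd_f3 a x hd,
      pd_zero, pd_one]

end Aux



lemma det4 (M : Matrix (Fin 4) (Fin 4) ℝ) : M.det = M 0 0 * M 1 1 * M 2 2 * M 3 3 - M 0 0 * M 1 1 * M 2 3 * M 3 2 - M 0 0 * M 1 2 * M 2 1 * M 3 3 + M 0 0 * M 1 2 * M 2 3 * M 3 1 + M 0 0 * M 1 3 * M 2 1 * M 3 2 - M 0 0 * M 1 3 * M 2 2 * M 3 1 - M 0 1 * M 1 0 * M 2 2 * M 3 3 + M 0 1 * M 1 0 * M 2 3 * M 3 2 + M 0 1 * M 1 2 * M 2 0 * M 3 3 - M 0 1 * M 1 2 * M 2 3 * M 3 0 - M 0 1 * M 1 3 * M 2 0 * M 3 2 + M 0 1 * M 1 3 * M 2 2 * M 3 0 + M 0 2 * M 1 0 * M 2 1 * M 3 3 - M 0 2 * M 1 0 * M 2 3 * M 3 1 - M 0 2 * M 1 1 * M 2 0 * M 3 3 + M 0 2 * M 1 1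 * M 2 3 * M 3 0 + M 0 2 * M 1 3 * M 2 0 * M 3 1 - M 0 2 * M 1 3 * M 2 1 * M 3 0 - M 0 3 * M 1 0 * M 2 1 * M 3 2 + M 0 3 * M 1 0 * M 2 2 * M 3 1 + M 0 3 * M 1 1 * M 2 0 * M 3 2 - M 0 3 * M 1 1 * M 2 2 * M 3 0 - M 0 3 * M 1 2 * M 2 0 * M 3 1 + M 0 3 * M 1 2 * M 2 1 * M 3 0 := by
  simp [Matrix.det_succ_row_zero, Fin.sum_univ_succ, Matrix.det_fin_three,
    Matrix.submatrix_apply,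
    show (Fin.succ 0 : Fin 4) = 1 from rfl, show (Fin.succ 1 : Fin 4) = 2 from rfl,
    show (Fin.succ 2 : Fin 4) = 3 from rfl,
    show Fin.succAbove (1:Fin 4) 2 = 3 from rfl, show Fin.succAbove (2:Fin 4) 2 = 3 from rfl,
    show Fin.succAbove (3:Fin 4) 2 = 2 from rfl]
  ring

set_option maxHeartbeats 2000000 in
lemma eps_eq (a b c d : Fin 4) : eps a b c d =
    (((b:ℕ):ℝ) - ((a:ℕ):ℝ)) * (((c:ℕ):ℝ) - ((a:ℕ):ℝ)) * (((d:ℕ):ℝ) - ((a:ℕ):ℝ)) *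
    (((c:ℕ):ℝ) - ((b:ℕ):ℝ)) * (((d:ℕ):ℝ) - ((b:ℕ):ℝ)) * (((d:ℕ):ℝ) - ((c:ℕ):ℝ)) / 12 := by
  rw [eps, det4]
  fin_cases a <;> fin_cases b <;> fin_cases c <;> fin_cases d <;>
    norm_num [Matrix.of_apply, Matrix.cons_val_zero, Matrix.cons_val_one, Matrix.head_cons,
      Matrix.cons_val_two, Matrix.cons_val_three, Matrix.vecTail, Matrix.vecHead, Fin.ext_iff,
      show ((0:Fin 4):ℕ) = 0 from rfl, show ((1:Fin 4):ℕ) = 1 from rfl,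
      show ((2:Fin 4):ℕ) = 2 from rfl, show ((3:Fin 4):ℕ) = 3 from rfl]

set_option maxHeartbeats 2000000 in
lemma Afr_eval (k : ℝ) (a W₁ W₂ : ℝ → ℝ) (x : Fin 4 → ℝ) (hd : DifferentiableAt ℝ a (x 0))
    (ha0 : a (x 0) ≠ 0) (hr : x 1 ≠ 0) (hsin : Real.sin (x 2) ≠ 0)
    (hk : 0 < 1 - k * (x 1) ^ 2) (A : Fin 4) :
    Afr k a W₁ W₂ x A = ![-(2 * W₂ (x 0)), 0, 0, 0] A := by
  have hpd := pd_hco k a x hd hk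
  have hχ : Real.sqrt (1 - k * (x 1) ^ 2) ≠ 0 := ne_of_gt (Real.sqrt_pos.2 hk)
  fin_cases A <;>
  · simp only [Afr, Fin.sum_univ_four, eps_eq]
    norm_num [show ((0:Fin 4):ℕ) = 0 from rfl, show ((1:Fin 4):ℕ) = 1 from rfl,
      show ((2:Fin 4):ℕ) = 2 from rfl, show ((3:Fin 4):ℕ) = 3 from rfl]
    simp only [Tup, Tfr, Tor, Fin.sum_univ_four, hpd]
    simp [eta, PD, hin, hco, omegaTRW, Matrix.diagonal, Matrix.of_apply,
      Matrix.cons_val_zero, Matrix.cons_val_one, Matrix.head_cons,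
      Matrix.cons_val_two, Matrix.cons_val_three, Matrix.vecTail, Matrix.vecHead]
    try (set s := Real.sqrt (1 - k * x 1 ^ 2) with hs
         have hs2 : s ^ 2 = 1 - k * x 1 ^ 2 := Real.sq_sqrt hk.le
         field_simp
         ring_nf)
    try (rw [show s ^ 3 = (1 - k * x 1 ^ 2) * s from by rw [pow_succ, hs2]]
         ring)

/-- The squared magnitude of the axial torsion of the TRW geometry:
η^{ab} A_a A_b = −4 W₂(t)². -/
theorem TRW_axial_torsion_magnitude (k : ℝ) (a W₁ W₂ : ℝ → ℝ)
    (ha : ContDiff ℝ ∞ a) (hapos : ∀ t, 0 < a t)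
    (hW₁ : ContDiff ℝ ∞ W₁) (hW₂ : ContDiff ℝ ∞ W₂)
    (x : Fin 4 → ℝ) (hr : 0 < x 1) (hθ₁ : 0 < x 2) (hθ₂ : x 2 < Real.pi)
    (hk : 0 < 1 - k * (x 1) ^ 2) :
    ∑ A, ∑ B, eta A B * Afr k a W₁ W₂ x A * Afr k a W₁ W₂ x B
      = -4 * (W₂ (x 0)) ^ 2 := by
  have hd : DifferentiableAt ℝ a (x 0) := (ha.differentiable (by simp)).differentiableAt
  have hA := Afr_eval k a W₁ W₂ x hd (hapos (x 0)).ne' hr.ne'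
    (Real.sin_pos_of_pos_of_lt_pi hθ₁ hθ₂).ne' hk
  simp [Fin.sum_univ_four, eta, Matrix.diagonal, hA,
    Matrix.cons_val_zero, Matrix.cons_val_one, Matrix.head_cons,
    Matrix.cons_val_two, Matrix.cons_val_three, Matrix.vecTail, Matrix.vecHead]
  ring

end
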